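/- Let p ≥ 1 be a real number and let α ≥ 2 be an integer. Then Σ_{k=2}^{α} Σ_{j ∈ (ℤ_{>0})^k, j₁+⋯+j_k = α} ∏_{i=1}^{k} j_i^{p·j_i} ≤ (2 + 4^p) · α^{p·α}. -/

import Mathlib

open Real Finset

variable (f : ℕ → ℝ)

noncomputable def S (f : ℕ → ℝ) (k n : ℕ) : ℝ :=
  ∑ j ∈ (Finset.Nat.antidiagonalTuple k n).filter (fun j => ∀ i, 0 < j i), ∏ i, f (j i)

lemma S_eq_zero (f : ℕ → ℝ) {k n : ℕ} (h : n < k) : S f k n = 0 := by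
  rw [S]
  have he : (Finset.Nat.antidiagonalTuple k n).filter (fun j => ∀ i, 0 < j i) = ∅ := by
    apply Finset.eq_empty_of_forall_notMem
    intro j hj
    simp only [mem_filter, Finset.Nat.mem_antidiagonalTuple] at hj
    have : k ≤ n := by
      calc k = ∑ _i : Fin k, 1 := by simp
      _ ≤ ∑ i, j i := Finset.sum_le_sum fun i _ => hj.2 i
      _ = n := hj.1
    omega
  rw [he, Finset.sum_empty]

lemma S_succ (k n : ℕ) :
    S f (k+1) n = ∑ m ∈ Icc 1 n, f m * S f k (n - m) := by
  simp only [S, Finset.mul_sum]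
  rw [Finset.sum_sigma']
  refine Finset.sum_nbij' (i := fun j => ⟨j 0, Fin.tail j⟩)
    (j := fun x => Fin.cons x.1 x.2) ?_ ?_ ?_ ?_ ?_
  · intro j hj
    simp only [mem_filter, Finset.Nat.mem_antidiagonalTuple] at hj
    simp only [Finset.mem_sigma, mem_filter, Finset.Nat.mem_antidiagonalTuple, mem_Icc]
    refine ⟨⟨hj.2 0, ?_⟩, ?_, fun i => hj.2 _⟩
    · calc j 0 ≤ ∑ i, j i := Finset.single_le_sum (fun i _ => Nat.zero_le _) (mem_univ 0)
      _ = n := hj.1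
    · have h1 := hj.1
      rw [Fin.sum_univ_succ] at h1
      simp only [Fin.tail]
      omega
  · intro x hx
    simp only [Finset.mem_sigma, mem_filter, Finset.Nat.mem_antidiagonalTuple, mem_Icc] at hx
    simp only [mem_filter, Finset.Nat.mem_antidiagonalTuple]
    constructor
    · rw [Fin.sum_univ_succ]
      simp only [Fin.cons_zero, Fin.cons_succ]
      have := hx.2.1
      omega
    · intro i
      refine Fin.cases ?_ ?_ i
      · exact hx.1.1
      · intro i'; simpa using hx.2.2 i'
  · intro j _; exact Fin.cons_self_tail j
  · intro x _; simp
  · intro j _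
    rw [Fin.prod_univ_succ]
    rfl

lemma S_zero_succ (f : ℕ → ℝ) (n : ℕ) : S f 0 (n+1) = 0 := by
  rw [S, Finset.Nat.antidiagonalTuple_zero_succ]
  simp

noncomputable def G (f : ℕ → ℝ) (n : ℕ) : ℝ := ∑ k ∈ range (n+1), S f k n

lemma G_zero (f : ℕ → ℝ) : G f 0 = 1 := by
  have h : S f 0 0 = 1 := by
    rw [S, Finset.Nat.antidiagonalTuple_zero_zero,
      Finset.filter_true_of_mem (fun x _ i => i.elim0)]
    simp
  rw [G, zero_add, Finset.sum_range_one, h]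

lemma G_succ (f : ℕ → ℝ) {n : ℕ} (hn : 1 ≤ n) :
    G f n = ∑ m ∈ Icc 1 n, f m * G f (n - m) := by
  obtain ⟨n', rfl⟩ : ∃ n', n = n' + 1 := ⟨n - 1, by omega⟩
  rw [G, Finset.sum_range_succ', S_zero_succ, add_zero]
  have h1 : ∀ k ∈ range (n'+1), S f (k+1) (n'+1) = ∑ m ∈ Icc 1 (n'+1), f m * S f k (n'+1-m) :=
    fun k _ => S_succ f k (n'+1)
  rw [Finset.sum_congr rfl h1, Finset.sum_comm]
  refine Finset.sum_congr rfl fun m hm => ?_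
  rw [← Finset.mul_sum]
  congr 1
  rw [G]
  refine (Finset.sum_subset ?_ ?_).symm
  · apply Finset.range_subset_range.2
    simp only [mem_Icc] at hm
    omega
  · intro k _ hk
    simp only [Finset.mem_range] at hk
    exact S_eq_zero f (by omega)

lemma nat_helper {a b n : ℕ} (hab : a + b = n) (h : 2*a ≤ n) :
    2^a * (a^a * b^b) ≤ n^n := by
  calc 2^a * (a^a*b^b) = (2*a)^a * b^b := by rw [mul_pow]; ring
  _ ≤ n^a * n^b :=
      Nat.mul_le_mul (Nat.pow_le_pow_left h a) (Nat.pow_le_pow_left (by omega) b)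
  _ = n^n := by rw [← pow_add, hab]

lemma real_helper {a b n : ℕ} (h : 2^a * (a^a*b^b) ≤ n^n) :
    (a:ℝ)^a * (b:ℝ)^b ≤ (1/2)^a * (n:ℝ)^n := by
  have h' : (2:ℝ)^a * ((a:ℝ)^a * (b:ℝ)^b) ≤ (n:ℝ)^n := by
    have := (Nat.cast_le (α := ℝ)).2 h
    push_cast at this
    exact this
  have h2 : (0:ℝ) < 2^a := by positivity
  rw [show ((1:ℝ)/2)^a * (n:ℝ)^n = (n:ℝ)^n / 2^a by rw [div_pow]; ring,
    le_div_iff₀ h2]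
  linarith

lemma term_bound {m n : ℕ} (h1 : 0 < m) (h2 : m < n) :
    (m:ℝ)^m * ((n-m:ℕ):ℝ)^(n-m) ≤ ((1/2:ℝ)^m + (1/2)^(n-m)) * (n:ℝ)^n := by
  have hnn : (0:ℝ) ≤ (n:ℝ)^n := by positivity
  rcases le_or_gt (2*m) n with h | h
  · have := real_helper (nat_helper (a := m) (b := n - m) (by omega) h)
    have h3 : (0:ℝ) ≤ (1/2:ℝ)^(n-m) * (n:ℝ)^n := by positivity
    nlinarith
  · have := real_helper (nat_helper (a := n - m) (b := m) (n := n) (by omega) (by omega))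
    have h3 : (0:ℝ) ≤ (1/2:ℝ)^m * (n:ℝ)^n := by positivity
    nlinarith

lemma geo_sum : ∀ M : ℕ, 2 ≤ M → ∑ m ∈ Icc 3 M, (1/2:ℝ)^m = 1/4 - (1/2:ℝ)^M := by
  intro M
  induction M with
  | zero => omega
  | succ M ih =>
    intro hM
    rcases Nat.lt_or_ge M 2 with h | h
    · have : M = 1 := by omega
      subst this
      rw [show Icc 3 2 = (∅ : Finset ℕ) by decide]
      norm_num
    · rw [Finset.sum_Icc_succ_top (by omega), ih h]
      ring

lemma reflect_sum {n : ℕ} (hn : 6 ≤ n) :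
    ∑ m ∈ Icc 3 (n-3), (1/2:ℝ)^(n-m) = ∑ m ∈ Icc 3 (n-3), (1/2:ℝ)^m := by
  refine Finset.sum_nbij' (i := fun m => n - m) (j := fun m => n - m) ?_ ?_ ?_ ?_ ?_
  · intro m hm; simp only [mem_Icc] at *; omega
  · intro m hm; simp only [mem_Icc] at *; omega
  · intro m hm; simp only [mem_Icc] at hm; show n - (n - m) = m; omega
  · intro m hm; simp only [mem_Icc] at hm; show n - (n - m) = m; omega
  · intro m hm; rfl

lemma middle_sum {n : ℕ} (hn : 9 ≤ n) :
    ∑ m ∈ Icc 3 (n-3), (m:ℝ)^m * ((n-m:ℕ):ℝ)^(n-m) ≤ (1/2) * (n:ℝ)^n := by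
  have hnn : (0:ℝ) ≤ (n:ℝ)^n := by positivity
  calc ∑ m ∈ Icc 3 (n-3), (m:ℝ)^m * ((n-m:ℕ):ℝ)^(n-m)
      ≤ ∑ m ∈ Icc 3 (n-3), ((1/2:ℝ)^m + (1/2)^(n-m)) * (n:ℝ)^n := by
        refine Finset.sum_le_sum fun m hm => ?_
        simp only [mem_Icc] at hm
        exact term_bound (by omega) (by omega)
  _ = ((∑ m ∈ Icc 3 (n-3), (1/2:ℝ)^m) + ∑ m ∈ Icc 3 (n-3), (1/2:ℝ)^(n-m)) * (n:ℝ)^n := by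
        rw [← Finset.sum_add_distrib, Finset.sum_mul]
  _ ≤ (1/2) * (n:ℝ)^n := by
        rw [reflect_sum (by omega), geo_sum (n-3) (by omega)]
        have : (0:ℝ) ≤ (1/2:ℝ)^(n-3) := by positivity
        nlinarith

lemma small_nat : ∀ n, 2 ≤ n → n ≤ 8 →
    7 * (∑ m ∈ Icc 1 (n-1), m^m * (n-m)^(n-m)) ≤ 6 * n^n := by
  decide

lemma lem_R {n : ℕ} (hn : 2 ≤ n) :
    ∑ m ∈ Icc 1 (n-1), (m:ℝ)^m * ((n-m:ℕ):ℝ)^(n-m) ≤ (6/7) * (n:ℝ)^n := by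
  rcases le_or_gt n 8 with h8 | h8
  · have h := small_nat n hn h8
    have hc : (7:ℝ) * (∑ m ∈ Icc 1 (n-1), (m:ℝ)^m * ((n-m:ℕ):ℝ)^(n-m)) ≤ 6 * (n:ℝ)^n := by
      have := (Nat.cast_le (α := ℝ)).2 h
      push_cast at this
      convert this using 2
    linarith
  · -- n ≥ 9
    have hnn : (0:ℝ) ≤ (n:ℝ)^n := by positivity
    have e0 : Icc 1 (n-1) = (Ioc 0 (n-1) : Finset ℕ) := by ext x; simp; omega
    have e3 : (Ioc 2 (n-3) : Finset ℕ) = Icc 3 (n-3) := by ext x; simp; omega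
    have hsplit : ∑ m ∈ Icc 1 (n-1), (m:ℝ)^m * ((n-m:ℕ):ℝ)^(n-m)
        = (∑ m ∈ (Ioc 0 2 : Finset ℕ), (m:ℝ)^m * ((n-m:ℕ):ℝ)^(n-m))
          + (∑ m ∈ (Ioc 2 (n-3) : Finset ℕ), (m:ℝ)^m * ((n-m:ℕ):ℝ)^(n-m))
          + ∑ m ∈ (Ioc (n-3) (n-1) : Finset ℕ), (m:ℝ)^m * ((n-m:ℕ):ℝ)^(n-m) := by
      rw [e0, ← Finset.sum_Ioc_consecutive _ (show (0:ℕ) ≤ 2 by omega)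
          (show (2:ℕ) ≤ n-1 by omega),
        ← Finset.sum_Ioc_consecutive _ (show (2:ℕ) ≤ n-3 by omega)
          (show n-3 ≤ n-1 by omega)]
      ring
    rw [hsplit]
    have e1 : (Ioc 0 2 : Finset ℕ) = ({1, 2} : Finset ℕ) := by decide
    have e2 : (Ioc (n-3) (n-1) : Finset ℕ) = ({n-2, n-1} : Finset ℕ) := by
      ext x; simp only [mem_Ioc, mem_insert, mem_singleton]; omega
    have hpow : (n:ℝ)^n = (n:ℝ)^(n-2) * (n:ℝ)^2 := by
      rw [← pow_add]; congr 1; omega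
    have hb : ((n-1:ℕ):ℝ)^(n-1) ≤ (n:ℝ)^(n-1) :=
      pow_le_pow_left₀ (by positivity) (by exact_mod_cast Nat.sub_le n 1) _
    have hb2 : ((n-2:ℕ):ℝ)^(n-2) ≤ (n:ℝ)^(n-2) :=
      pow_le_pow_left₀ (by positivity) (by exact_mod_cast Nat.sub_le n 2) _
    have hpow1 : (n:ℝ)^(n-1) = (n:ℝ)^(n-2) * (n:ℝ) := by
      rw [← pow_succ]; congr 1; omega
    have s1 : ∑ m ∈ (Ioc 0 2 : Finset ℕ), (m:ℝ)^m * ((n-m:ℕ):ℝ)^(n-m)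
        ≤ (n:ℝ)^(n-1) + 4 * (n:ℝ)^(n-2) := by
      rw [e1, Finset.sum_pair (by norm_num)]
      norm_num
      nlinarith [hb, hb2]
    have s3 : ∑ m ∈ (Ioc (n-3) (n-1) : Finset ℕ), (m:ℝ)^m * ((n-m:ℕ):ℝ)^(n-m)
        ≤ 4 * (n:ℝ)^(n-2) + (n:ℝ)^(n-1) := by
      rw [e2, Finset.sum_pair (show n-2 ≠ n-1 by omega)]
      have r1 : n - (n-2) = 2 := by omega
      have r2 : n - (n-1) = 1 := by omega
      rw [r1, r2]
      norm_num
      nlinarith [hb, hb2]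
    have s2 : ∑ m ∈ (Ioc 2 (n-3) : Finset ℕ), (m:ℝ)^m * ((n-m:ℕ):ℝ)^(n-m)
        ≤ (1/2) * (n:ℝ)^n := by
      rw [e3]; exact middle_sum (by omega)
    have hn9 : (9:ℝ) ≤ (n:ℝ) := by exact_mod_cast h8
    have hq : 2 * (n:ℝ)^(n-1) + 8 * (n:ℝ)^(n-2) ≤ (5/14) * (n:ℝ)^n := by
      rw [hpow, hpow1]
      have hp2 : (0:ℝ) ≤ (n:ℝ)^(n-2) := by positivity
      have hcoef : (0:ℝ) ≤ 5/14*(n:ℝ)^2 - 2*(n:ℝ) - 8 := by nlinarith [hn9]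
      nlinarith [mul_nonneg hp2 hcoef]
    linarith

lemma hrw_aux (p : ℝ) (a : ℕ) : (a:ℝ)^(p*(a:ℝ)) = ((a:ℝ)^(a:ℕ))^p := by
  rw [mul_comm, Real.rpow_mul (Nat.cast_nonneg a), Real.rpow_natCast]

lemma rpow_le_frac {p N B : ℝ} (hp : 1 ≤ p) (h1 : 0 < N) (h2 : N ≤ B) (h3 : 0 < B) :
    N^p ≤ N/B * B^p := by
  have hE : N^p = (N/B)^p * B^p := by
    rw [← Real.mul_rpow (by positivity) h3.le]
    congr 1
    field_simp
  rw [hE]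
  have h4 : (N/B)^p ≤ N/B := by
    calc (N/B)^p ≤ (N/B)^(1:ℝ) :=
      Real.rpow_le_rpow_of_exponent_ge (by positivity) ((div_le_one h3).2 h2) hp
    _ = N/B := Real.rpow_one _
  have : (0:ℝ) ≤ B^p := (Real.rpow_pos_of_pos h3 p).le
  exact mul_le_mul_of_nonneg_right h4 this

lemma key {p : ℝ} (hp : 1 ≤ p) {n : ℕ} (hn : 2 ≤ n)
    (hR : ∑ m ∈ Icc 1 (n-1), (m:ℝ)^m * ((n-m:ℕ):ℝ)^(n-m) ≤ (6/7) * (n:ℝ)^n) :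
    ∑ m ∈ Icc 1 (n-1), (m:ℝ)^(p*(m:ℝ)) * ((n-m:ℕ):ℝ)^(p*((n-m:ℕ):ℝ))
      ≤ (6/7) * (n:ℝ)^(p*(n:ℝ)) := by
  have hC : (0:ℝ) < (n:ℝ)^(n:ℕ) := by positivity
  calc ∑ m ∈ Icc 1 (n-1), (m:ℝ)^(p*(m:ℝ)) * ((n-m:ℕ):ℝ)^(p*((n-m:ℕ):ℝ))
      ≤ ∑ m ∈ Icc 1 (n-1),
          ((m:ℝ)^m * ((n-m:ℕ):ℝ)^(n-m)) / ((n:ℝ)^(n:ℕ)) * ((n:ℝ)^(n:ℕ))^p := by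
        refine Finset.sum_le_sum fun m hm => ?_
        simp only [mem_Icc] at hm
        have hm1 : (0:ℝ) < (m:ℝ) := by exact_mod_cast (by omega : 0 < m)
        have hm2 : (0:ℝ) < ((n-m:ℕ):ℝ) := by exact_mod_cast (by omega : 0 < n - m)
        have hN : (0:ℝ) < (m:ℝ)^m * ((n-m:ℕ):ℝ)^(n-m) := by positivity
        have hNB : (m:ℝ)^m * ((n-m:ℕ):ℝ)^(n-m) ≤ (n:ℝ)^(n:ℕ) := by
          have b1 : (m:ℝ) ≤ (n:ℝ) := by exact_mod_cast (by omega : m ≤ n)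
          have b2 : ((n-m:ℕ):ℝ) ≤ (n:ℝ) := by exact_mod_cast (by omega : n - m ≤ n)
          have b3 : (m:ℝ)^m * ((n-m:ℕ):ℝ)^(n-m) ≤ (n:ℝ)^m * (n:ℝ)^(n-m) :=
            mul_le_mul (pow_le_pow_left₀ hm1.le b1 m)
              (pow_le_pow_left₀ hm2.le b2 (n-m)) (by positivity) (by positivity)
          have b4 : (n:ℝ)^m * (n:ℝ)^(n-m) = (n:ℝ)^(n:ℕ) := by
            rw [← pow_add]; congr 1; omega
          linarith
        rw [hrw_aux, hrw_aux, ← Real.mul_rpow (by positivity) (by positivity)]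
        exact rpow_le_frac hp hN hNB hC
  _ = (∑ m ∈ Icc 1 (n-1), (m:ℝ)^m * ((n-m:ℕ):ℝ)^(n-m)) / ((n:ℝ)^(n:ℕ)) * ((n:ℝ)^(n:ℕ))^p := by
        rw [← Finset.sum_mul, ← Finset.sum_div]
  _ ≤ (6/7) * (n:ℝ)^(p*(n:ℝ)) := by
        rw [hrw_aux p n]
        have hdiv : (∑ m ∈ Icc 1 (n-1), (m:ℝ)^m * ((n-m:ℕ):ℝ)^(n-m)) / ((n:ℝ)^(n:ℕ)) ≤ 6/7 := by
          rw [div_le_iff₀ hC]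
          linarith
        exact mul_le_mul_of_nonneg_right hdiv (Real.rpow_pos_of_pos hC p).le

lemma S_zero_zero (f : ℕ → ℝ) : S f 0 0 = 1 := by
  rw [S, Finset.Nat.antidiagonalTuple_zero_zero,
    Finset.filter_true_of_mem (fun x _ i => i.elim0)]
  simp

lemma G_le (p : ℝ) (hp : 1 ≤ p) : ∀ n, 1 ≤ n →
    G (fun m => (m:ℝ)^(p*(m:ℝ))) n ≤ 7 * (n:ℝ)^(p*(n:ℝ)) := by
  intro n
  induction n using Nat.strong_induction_on with
  | _ n ih =>
    intro hn
    set f := fun m : ℕ => (m:ℝ)^(p*(m:ℝ)) with hf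
    rw [G_succ f hn]
    rcases eq_or_lt_of_le hn with h1 | h2
    · -- n = 1
      rw [← h1]
      rw [show Icc 1 1 = ({1} : Finset ℕ) by decide, Finset.sum_singleton]
      rw [show (1:ℕ) - 1 = 0 from rfl, G_zero]
      simp only [hf, Nat.cast_one, Real.one_rpow, mul_one]
      norm_num
    · -- n ≥ 2
      have hn2 : 2 ≤ n := h2
      have hsplit : Icc 1 n = insert n (Icc 1 (n-1)) := by
        ext x; simp only [mem_Icc, mem_insert]; omega
      rw [hsplit, Finset.sum_insert (by simp only [mem_Icc]; omega)]
      rw [Nat.sub_self, G_zero, mul_one]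
      have hsum : ∑ m ∈ Icc 1 (n-1), f m * G f (n - m)
          ≤ ∑ m ∈ Icc 1 (n-1), f m * (7 * ((n-m:ℕ):ℝ)^(p*((n-m:ℕ):ℝ))) := by
        refine Finset.sum_le_sum fun m hm => ?_
        simp only [mem_Icc] at hm
        have hfm : 0 ≤ f m := Real.rpow_nonneg (Nat.cast_nonneg m) _
        exact mul_le_mul_of_nonneg_left (ih (n-m) (by omega) (by omega)) hfm
      have hsum2 : ∑ m ∈ Icc 1 (n-1), f m * (7 * ((n-m:ℕ):ℝ)^(p*((n-m:ℕ):ℝ)))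
          = 7 * ∑ m ∈ Icc 1 (n-1), f m * ((n-m:ℕ):ℝ)^(p*((n-m:ℕ):ℝ)) := by
        rw [Finset.mul_sum]
        exact Finset.sum_congr rfl fun m _ => by ring
      have hkey : ∑ m ∈ Icc 1 (n-1), f m * ((n-m:ℕ):ℝ)^(p*((n-m:ℕ):ℝ))
          ≤ (6/7) * (n:ℝ)^(p*(n:ℝ)) := key hp hn2 (lem_R hn2)
      have hfn : f n = (n:ℝ)^(p*(n:ℝ)) := rfl
      linarith

theorem total_tuple_sum_rpow_bound (p : ℝ) (hp : 1 ≤ p) (α : ℕ) (hα : 2 ≤ α) :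
    ∑ k ∈ Finset.Icc 2 α,
        ∑ j ∈ (Finset.Nat.antidiagonalTuple k α).filter (fun j => ∀ i, 0 < j i),
          ∏ i, ((j i : ℝ) ^ (p * (j i : ℝ))) ≤
      (2 + (4 : ℝ) ^ p) * (α : ℝ) ^ (p * (α : ℝ)) := by
  set f := fun m : ℕ => (m:ℝ)^(p*(m:ℝ)) with hf
  have hT : ∑ k ∈ Finset.Icc 2 α,
      ∑ j ∈ (Finset.Nat.antidiagonalTuple k α).filter (fun j => ∀ i, 0 < j i),
        ∏ i, ((j i : ℝ) ^ (p * (j i : ℝ)))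
      = ∑ k ∈ Icc 2 α, S f k α := rfl
  rw [hT]
  have hS0 : S f 0 α = 0 := by
    obtain ⟨a, rfl⟩ : ∃ a, α = a + 1 := ⟨α - 1, by omega⟩
    exact S_zero_succ f a
  have hS1 : S f 1 α = f α := by
    rw [S_succ]
    rw [Finset.sum_eq_single α]
    · rw [Nat.sub_self, S_zero_zero, mul_one]
    · intro b hb hbne
      simp only [mem_Icc] at hb
      obtain ⟨c, hc⟩ : ∃ c, α - b = c + 1 := ⟨α - b - 1, by omega⟩
      rw [hc, S_zero_succ, mul_zero]
    · intro h
      exact absurd (by simp only [mem_Icc]; omega) h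
  have hG : G f α = S f 0 α + (S f 1 α + ∑ k ∈ Icc 2 α, S f k α) := by
    rw [G, show range (α+1) = insert 0 (insert 1 (Icc 2 α)) by
      ext x; simp only [mem_range, mem_insert, mem_Icc]; omega]
    rw [Finset.sum_insert (by simp only [mem_insert, mem_Icc]; omega),
      Finset.sum_insert (by simp only [mem_Icc]; omega)]
  have hGle : G f α ≤ 7 * (α:ℝ)^(p*(α:ℝ)) := G_le p hp α (by omega)
  have hfα : f α = (α:ℝ)^(p*(α:ℝ)) := rfl
  have h4 : (4:ℝ) ≤ (4:ℝ)^p := by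
    calc (4:ℝ) = (4:ℝ)^(1:ℝ) := (Real.rpow_one 4).symm
    _ ≤ (4:ℝ)^p := Real.rpow_le_rpow_of_exponent_le (by norm_num) hp
  have hpos : (0:ℝ) ≤ (α:ℝ)^(p*(α:ℝ)) := Real.rpow_nonneg (Nat.cast_nonneg α) _
  nlinarith [hGle]
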